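/- Let K be a field, n ≥ 1, and let a_{ij} = a_{ji} ∈ K be symmetric edge weights of a weighted graph on vertices {1,…,n} with upper unitriangular Seifert matrix S (entry −a_{ij} in position (i,j) for i < j, 1's on the diagonal). For t ∈ K, t ≠ 0, set M(t) = t·S + t⁻¹·Sᵀ, G(t) = det M(t), let N(t) be M(t) with the first row and column deleted, G₁(t) = det N(t), and A_{ij}(t) = (adj N(t))_{ij}. Then for all nonzero x, y ∈ K: G(x)·G₁(y) − G(y)·G₁(x) = (x + x⁻¹ − y − y⁻¹)·G₁(x)·G₁(y) + Σ_{2 ≤ i,j ≤ n} a_{1i}·a_{1j}·(G₁(x)·A_{ij}(y) − G₁(y)·A_{ij}(x)). -/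

import Mathlib

open Matrix Finset

private lemma det_border {K : Type*} [CommRing K] {n : ℕ}
    (M : Matrix (Fin (n + 1)) (Fin (n + 1)) K) :
    M.det = M 0 0 * (M.submatrix Fin.succ Fin.succ).det
      - ∑ i : Fin n, ∑ j : Fin n,
          M 0 i.succ * (M.submatrix Fin.succ Fin.succ).adjugate i j * M j.succ 0 := by
  rcases n with _ | m
  · simp [Matrix.det_fin_one, Matrix.det_fin_zero]
  · have hadj : ∀ (i j : Fin (m + 1)),
        det ((M.submatrix Fin.succ Fin.succ).submatrix j.succAbove i.succAbove)
          = (-1 : K) ^ ((j : ℕ) + (i : ℕ)) *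
              (M.submatrix Fin.succ Fin.succ).adjugate i j := by
      intro i j
      rw [Matrix.adjugate_fin_succ_eq_det_submatrix, ← mul_assoc, ← pow_add,
        show ((j : ℕ) + (i : ℕ)) + ((j : ℕ) + (i : ℕ)) = 2 * ((j : ℕ) + (i : ℕ)) by ring,
        pow_mul]
      simp
    have hzero : ∀ i : Fin (m + 1), (i.succ).succAbove 0 = 0 := by
      intro i
      rw [Fin.succAbove_of_castSucc_lt]
      · rfl
      · simp [Fin.castSucc_zero, Fin.succ_pos]
    have hcol : ∀ i : Fin (m + 1),
        det (M.submatrix Fin.succ (i.succ).succAbove)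
          = ∑ j : Fin (m + 1), (-1 : K) ^ (j : ℕ) * M j.succ 0 *
              ((-1 : K) ^ ((j : ℕ) + (i : ℕ)) *
                (M.submatrix Fin.succ Fin.succ).adjugate i j) := by
      intro i
      rw [Matrix.det_succ_column_zero]
      refine Finset.sum_congr rfl fun j _ => ?_
      rw [← hadj i j]
      congr 2
      · ext p q
        simp [Fin.succ_succAbove_succ]
    rw [Matrix.det_succ_row_zero, Fin.sum_univ_succ]
    simp only [Fin.val_zero, pow_zero, one_mul, Fin.succAbove_zero, Fin.val_succ]
    rw [sub_eq_add_neg]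
    congr 1
    rw [← Finset.sum_neg_distrib]
    refine Finset.sum_congr rfl fun i _ => ?_
    rw [hcol i, Finset.mul_sum, ← Finset.sum_neg_distrib]
    refine Finset.sum_congr rfl fun j _ => ?_
    have hsign : (-1 : K) ^ ((i : ℕ) + 1) *
        ((-1 : K) ^ (j : ℕ) * (-1 : K) ^ ((j : ℕ) + (i : ℕ))) = -1 := by
      rw [← pow_add, ← pow_add,
        show ((i : ℕ) + 1) + ((j : ℕ) + ((j : ℕ) + (i : ℕ)))
          = 2 * ((i : ℕ) + (j : ℕ)) + 1 by ring, pow_succ, pow_mul]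
      simp
    linear_combination
      (M 0 i.succ * M j.succ 0 * (M.submatrix Fin.succ Fin.succ).adjugate i j) * hsign

/-- The Christoffel–Darboux identity (4) of Proposition 1, multiplied through by
`(x - y)`.  Here the weighted graph has `n + 1` vertices, symmetric weights `a`,
Seifert matrix `S`, `Mf t = t • S + t⁻¹ • Sᵀ`, `G t = det (Mf t)`, `Nf t` is
`Mf t` with the first row and column deleted, `G1 t = det (Nf t)`, and
`Af t = adjugate (Nf t)`. -/
theorem coxeter_christoffel_darboux {K : Type*} [Field K] (n : ℕ)
    (a : Fin (n + 1) → Fin (n + 1) → K) (hsym : ∀ i j, a i j = a j i)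
    (S : Matrix (Fin (n + 1)) (Fin (n + 1)) K)
    (hS : ∀ i j, S i j = if i = j then 1 else if i < j then -a i j else 0)
    (Mf : K → Matrix (Fin (n + 1)) (Fin (n + 1)) K)
    (hMf : ∀ t, Mf t = t • S + t⁻¹ • Sᵀ)
    (G : K → K) (hG : ∀ t, G t = (Mf t).det)
    (Nf : K → Matrix (Fin n) (Fin n) K)
    (hNf : ∀ t, Nf t = (Mf t).submatrix Fin.succ Fin.succ)
    (G1 : K → K) (hG1 : ∀ t, G1 t = (Nf t).det)
    (Af : K → Matrix (Fin n) (Fin n) K)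
    (hAf : ∀ t, Af t = (Nf t).adjugate)
    (x y : K) (hx : x ≠ 0) (hy : y ≠ 0) :
    G x * G1 y - G y * G1 x
      = (x + x⁻¹ - y - y⁻¹) * G1 x * G1 y
        + ∑ i : Fin n, ∑ j : Fin n,
            a 0 i.succ * a 0 j.succ * (G1 x * Af y i j - G1 y * Af x i j) := by
  have key : ∀ t : K, t ≠ 0 →
      G t = (t + t⁻¹) * G1 t
        - ∑ i : Fin n, ∑ j : Fin n, a 0 i.succ * a 0 j.succ * Af t i j := by
    intro t ht
    rw [hG t, det_border, ← hNf t, ← hG1 t, ← hAf t]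
    congr 1
    · congr 1
      rw [hMf]
      simp [hS, Matrix.add_apply]
    · refine Finset.sum_congr rfl fun i _ => Finset.sum_congr rfl fun j _ => ?_
      have h1 : Mf t 0 i.succ = -(t * a 0 i.succ) := by
        rw [hMf]
        simp [hS, Matrix.add_apply, (Fin.succ_ne_zero i).symm, Fin.succ_ne_zero i,
          Fin.succ_pos, Fin.pos_iff_ne_zero]
      have h2 : Mf t j.succ 0 = -(t⁻¹ * a 0 j.succ) := by
        rw [hMf]
        simp [hS, Matrix.add_apply, Fin.succ_ne_zero j, (Fin.succ_ne_zero j).symm,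
          Fin.succ_pos, Fin.pos_iff_ne_zero, Fin.not_lt_zero]
      rw [h1, h2]
      field_simp
  have hsplit : ∑ i : Fin n, ∑ j : Fin n,
        a 0 i.succ * a 0 j.succ * (G1 x * Af y i j - G1 y * Af x i j)
      = G1 x * (∑ i : Fin n, ∑ j : Fin n, a 0 i.succ * a 0 j.succ * Af y i j)
        - G1 y * (∑ i : Fin n, ∑ j : Fin n, a 0 i.succ * a 0 j.succ * Af x i j) := by
    rw [Finset.mul_sum, Finset.mul_sum, ← Finset.sum_sub_distrib]
    refine Finset.sum_congr rfl fun i _ => ?_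
    rw [Finset.mul_sum, Finset.mul_sum, ← Finset.sum_sub_distrib]
    refine Finset.sum_congr rfl fun j _ => ?_
    ring
  rw [key x hx, key y hy, hsplit]
  ring
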